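/- Let w₁,…,w_K > 0 and q > 0, with a = ∑_j w_j^{2/3} and b = ∑_j w_j²/q². Among all positive real tuples (q₁,…,q_K) satisfying ∑_{i=1}^K w_i²/q_i² = ∑_{i=1}^K w_i²/q², the sum ∑_{i=1}^K q_i is minimized by q_i = sqrt(a/b)·w_i^{2/3}, and the minimum value is q·a^{3/2}/sqrt(∑_j w_j²). -/

import Mathlib

/-- Theorem 1 of DAdaQuant (real-valued relaxation): among all positive tuples
`(q₁,…,q_K)` with `∑ wᵢ²/qᵢ² = ∑ wᵢ²/q²`, the total budget `∑ qᵢ` is minimized by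
`qᵢ = sqrt(a/b)·wᵢ^{2/3}` (where `a = ∑ wⱼ^{2/3}`, `b = ∑ wⱼ²/q²`), with minimum
value `q·a^{3/2}/sqrt(∑ wⱼ²)`. -/
theorem dadaquant_theorem1 (K : ℕ) (hK : 0 < K)
    (w : Fin K → ℝ) (hw : ∀ i, 0 < w i) (q : ℝ) (hq : 0 < q)
    (a b : ℝ) (ha : a = ∑ j, w j ^ ((2:ℝ)/3)) (hb : b = ∑ j, w j ^ 2 / q ^ 2)
    (qstar : Fin K → ℝ)
    (hqstar : ∀ i, qstar i = Real.sqrt (a / b) * w i ^ ((2:ℝ)/3)) :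
    (∑ i, w i ^ 2 / (qstar i) ^ 2 = ∑ i, w i ^ 2 / q ^ 2) ∧
    (∀ p : Fin K → ℝ, (∀ i, 0 < p i) →
      (∑ i, w i ^ 2 / (p i) ^ 2 = ∑ i, w i ^ 2 / q ^ 2) →
      ∑ i, qstar i ≤ ∑ i, p i) ∧
    (∑ i, qstar i = q * a ^ ((3:ℝ)/2) / Real.sqrt (∑ j, w j ^ 2)) := by
  haveI : Nonempty (Fin K) := Fin.pos_iff_nonempty.mp hK
  have ha_pos : 0 < a := by
    rw [ha]; exact Finset.sum_pos (fun i _ => Real.rpow_pos_of_pos (hw i) _) Finset.univ_nonempty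
  have hW : 0 < ∑ j, w j ^ 2 :=
    Finset.sum_pos (fun i _ => pow_pos (hw i) 2) Finset.univ_nonempty
  have hb_pos : 0 < b := by
    rw [hb]; exact Finset.sum_pos (fun i _ => div_pos (pow_pos (hw i) 2) (pow_pos hq 2))
      Finset.univ_nonempty
  have hsqrt : Real.sqrt (a / b) = a ^ ((1:ℝ)/2) / b ^ ((1:ℝ)/2) := by
    rw [Real.sqrt_eq_rpow, Real.div_rpow ha_pos.le hb_pos.le]
  have ha32 : a ^ ((3:ℝ)/2) = a ^ ((1:ℝ)/2) * a := by
    rw [show (3:ℝ)/2 = 1/2 + 1 by norm_num, Real.rpow_add ha_pos, Real.rpow_one]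
  -- ∑ qstar = a^(3/2) / b^(1/2)
  have hsumq : ∑ i, qstar i = a ^ ((3:ℝ)/2) / b ^ ((1:ℝ)/2) := by
    have h0 : ∑ i, qstar i = Real.sqrt (a / b) * a := by
      rw [Finset.sum_congr rfl fun i _ => hqstar i, ← Finset.mul_sum, ← ha]
    rw [h0, hsqrt, ha32]; ring
  -- constraint for qstar
  have hc1 : ∑ i, w i ^ 2 / (qstar i) ^ 2 = ∑ i, w i ^ 2 / q ^ 2 := by
    rw [← hb]
    have key : ∀ i, w i ^ 2 / (qstar i) ^ 2 = (b / a) * w i ^ ((2:ℝ)/3) := by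
      intro i
      have h1 : (qstar i) ^ 2 = (a / b) * (w i ^ ((2:ℝ)/3)) ^ 2 := by
        rw [hqstar i, mul_pow, Real.sq_sqrt (by positivity)]
      have h2 : (w i ^ ((2:ℝ)/3)) ^ 2 = w i ^ ((4:ℝ)/3) := by
        rw [← Real.rpow_natCast (w i ^ ((2:ℝ)/3)) 2, ← Real.rpow_mul (hw i).le]
        norm_num
      have h3 : (w i) ^ 2 = w i ^ ((2:ℝ)) := by
        rw [← Real.rpow_natCast (w i) 2]; norm_num
      have h4 : w i ^ ((2:ℝ)) / w i ^ ((4:ℝ)/3) = w i ^ ((2:ℝ)/3) := by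
        rw [← Real.rpow_sub (hw i)]; norm_num
      have h5 : w i ^ ((2:ℝ)) / (a / b * w i ^ ((4:ℝ)/3))
          = b / a * (w i ^ ((2:ℝ)) / w i ^ ((4:ℝ)/3)) := by
        have hwi : (0:ℝ) < w i ^ ((4:ℝ)/3) := Real.rpow_pos_of_pos (hw i) _
        field_simp
      rw [h1, h2, h3, h5, h4]
    calc ∑ i, w i ^ 2 / (qstar i) ^ 2 = ∑ i, (b / a) * w i ^ ((2:ℝ)/3) :=
          Finset.sum_congr rfl fun i _ => key i
      _ = (b / a) * a := by rw [← Finset.mul_sum, ← ha]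
      _ = b := by field_simp
  refine ⟨hc1, ?_, ?_⟩
  · intro p hp hcon
    rw [← hb] at hcon
    set S := ∑ i, p i with hS
    have hS_pos : 0 < S := Finset.sum_pos (fun i _ => hp i) Finset.univ_nonempty
    have hpq : Real.HolderConjugate 3 (3/2) := ⟨by norm_num, by norm_num, by norm_num⟩
    have holder := Real.inner_le_Lp_mul_Lq_of_nonneg Finset.univ hpq
      (f := fun i => (w i ^ 2 / (p i) ^ 2) ^ ((1:ℝ)/3))
      (g := fun i => (p i) ^ ((2:ℝ)/3))
      (fun i _ => Real.rpow_nonneg (by positivity) _)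
      (fun i _ => Real.rpow_nonneg (hp i).le _)
    have hfg : ∀ i : Fin K, (w i ^ 2 / (p i) ^ 2) ^ ((1:ℝ)/3) * (p i) ^ ((2:ℝ)/3)
        = w i ^ ((2:ℝ)/3) := by
      intro i
      have e1 : (w i ^ 2 / (p i) ^ 2) ^ ((1:ℝ)/3)
          = w i ^ ((2:ℝ)/3) / (p i) ^ ((2:ℝ)/3) := by
        rw [Real.div_rpow (by positivity) (by positivity),
          ← Real.rpow_natCast (w i) 2, ← Real.rpow_natCast (p i) 2,
          ← Real.rpow_mul (hw i).le, ← Real.rpow_mul (hp i).le]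
        norm_num
      rw [e1, div_mul_cancel₀]
      exact ne_of_gt (Real.rpow_pos_of_pos (hp i) _)
    have hf3 : ∀ i : Fin K, ((w i ^ 2 / (p i) ^ 2) ^ ((1:ℝ)/3)) ^ (3:ℝ)
        = w i ^ 2 / (p i) ^ 2 := by
      intro i
      rw [← Real.rpow_mul (by positivity)]
      norm_num
    have hg32 : ∀ i : Fin K, ((p i) ^ ((2:ℝ)/3)) ^ ((3:ℝ)/2) = p i := by
      intro i
      rw [← Real.rpow_mul (hp i).le]
      norm_num
    rw [Finset.sum_congr rfl (fun i _ => hfg i),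
        Finset.sum_congr rfl (fun i _ => hf3 i),
        Finset.sum_congr rfl (fun i _ => hg32 i), hcon, ← ha, ← hS] at holder
    have h13 : (1:ℝ) / (3/2) = 2/3 := by norm_num
    rw [h13] at holder
    have h2 : a ^ ((3:ℝ)/2) ≤ (b ^ ((1:ℝ)/3) * S ^ ((2:ℝ)/3)) ^ ((3:ℝ)/2) :=
      Real.rpow_le_rpow ha_pos.le holder (by norm_num)
    have h3 : (b ^ ((1:ℝ)/3) * S ^ ((2:ℝ)/3)) ^ ((3:ℝ)/2) = b ^ ((1:ℝ)/2) * S := by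
      rw [Real.mul_rpow (by positivity) (by positivity),
        ← Real.rpow_mul hb_pos.le, ← Real.rpow_mul hS_pos.le]
      norm_num
    rw [h3] at h2
    rw [hsumq, div_le_iff₀ (by positivity)]
    calc a ^ ((3:ℝ)/2) ≤ b ^ ((1:ℝ)/2) * S := h2
      _ = S * b ^ ((1:ℝ)/2) := mul_comm _ _
  · rw [hsumq]
    have hbW : b = (∑ j, w j ^ 2) / q ^ 2 := by rw [hb, Finset.sum_div]
    have hbq : b ^ ((1:ℝ)/2) = Real.sqrt (∑ j, w j ^ 2) / q := by
      rw [← Real.sqrt_eq_rpow, hbW, Real.sqrt_div hW.le, Real.sqrt_sq hq.le]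
    rw [hbq]
    have hsW : 0 < Real.sqrt (∑ j, w j ^ 2) := Real.sqrt_pos.mpr hW
    field_simp
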